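/- Let b : [0, ∞) → ℝ be continuous, nonnegative and Lebesgue integrable on [0, ∞), and let a : [0, ∞) → ℝ be differentiable with a′(t) = a(t) − b(t) for all t ≥ 0 and a(0) = ∫₀^∞ e^{−s} b(s) ds. Then for every t ≥ 0 one has a(t) = ∫_t^∞ e^{t−s} b(s) ds, hence 0 ≤ a(t) ≤ ∫_t^∞ b(s) ds, and a(t) → 0 as t → ∞. -/

import Mathlib

open Set MeasureTheory Filter

private lemma exp_mul_int {b : ℝ → ℝ}
    (hb_int : IntegrableOn b (Set.Ici 0)) (t : ℝ) (ht : (0:ℝ) ≤ t) :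
    IntegrableOn (fun s => Real.exp (t - s) * b s) (Set.Ici t) := by
  have hsub : Set.Ici t ⊆ Set.Ici (0:ℝ) := Set.Ici_subset_Ici.2 ht
  refine Integrable.mono (hb_int.mono_set hsub) ?_ ?_
  · exact ((Real.continuous_exp.comp (continuous_const.sub continuous_id)).aestronglyMeasurable).mul
      ((hb_int.mono_set hsub).aestronglyMeasurable)
  · filter_upwards [ae_restrict_mem measurableSet_Ici] with s hs
    have h1 : Real.exp (t - s) ≤ 1 := Real.exp_le_one_iff.2 (by linarith [mem_Ici.1 hs])
    have h0 : (0:ℝ) < Real.exp (t - s) := Real.exp_pos _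
    simp only [norm_mul, Real.norm_eq_abs, abs_of_pos h0]
    calc Real.exp (t - s) * |b s| ≤ 1 * |b s| :=
          mul_le_mul_of_nonneg_right h1 (abs_nonneg _)
      _ = |b s| := one_mul _

/-- The ODE argument of Lemma 4.14: if `a' = a - b` on `[0, ∞)` with `b` continuous,
nonnegative and integrable, and `a(0) = ∫₀^∞ e^{-s} b(s) ds`, then
`a(t) = ∫_t^∞ e^{t-s} b(s) ds`, hence `0 ≤ a(t) ≤ ∫_t^∞ b(s) ds` and `a(t) → 0`. -/
theorem ode_decay (a b : ℝ → ℝ)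
    (hb_cont : ContinuousOn b (Set.Ici 0))
    (hb_nonneg : ∀ t ∈ Set.Ici (0 : ℝ), 0 ≤ b t)
    (hb_int : IntegrableOn b (Set.Ici 0))
    (ha : ∀ t ∈ Set.Ici (0 : ℝ), HasDerivWithinAt a (a t - b t) (Set.Ici 0) t)
    (ha0 : a 0 = ∫ s in Set.Ici (0 : ℝ), Real.exp (-s) * b s) :
    (∀ t ∈ Set.Ici (0 : ℝ), a t = ∫ s in Set.Ici t, Real.exp (t - s) * b s) ∧
    (∀ t ∈ Set.Ici (0 : ℝ), 0 ≤ a t ∧ a t ≤ ∫ s in Set.Ici t, b s) ∧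
    Tendsto a atTop (nhds 0) := by
  -- the weighted integrand is integrable on `[0, ∞)`
  have hbe_int : IntegrableOn (fun s => Real.exp (-s) * b s) (Set.Ici 0) := by
    have := exp_mul_int hb_int 0 le_rfl
    simpa using this
  -- derivative of `f x = exp(-x) * a x`
  set f : ℝ → ℝ := fun x => Real.exp (-x) * a x with hf_def
  have hf_deriv : ∀ x ∈ Set.Ici (0:ℝ),
      HasDerivWithinAt f (-(Real.exp (-x) * b x)) (Set.Ici 0) x := by
    intro x hx
    have h1 : HasDerivWithinAt (fun y : ℝ => Real.exp (-y)) (-Real.exp (-x)) (Set.Ici 0) x := by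
      have := (Real.hasDerivAt_exp (-x)).comp x ((hasDerivAt_id x).neg)
      simpa [mul_comm, Function.comp_def] using this.hasDerivWithinAt
    have := h1.mul (ha x hx)
    convert this using 1
    exacts [rfl, rfl, rfl, by ring]
  -- key identity: `exp(-t) * a t = ∫_{[t,∞)} exp(-s) b s`
  have key : ∀ t : ℝ, 0 ≤ t → f t = ∫ s in Set.Ici t, Real.exp (-s) * b s := by
    intro t ht
    have hIccsub : Set.Icc (0:ℝ) t ⊆ Set.Ici 0 := Set.Icc_subset_Ici_self
    have hcont_f : ContinuousOn f (Set.Icc 0 t) := fun x hx =>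
      ((hf_deriv x (hIccsub hx)).continuousWithinAt).mono hIccsub
    have hderiv : ∀ x ∈ Set.Ioo (0:ℝ) t,
        HasDerivWithinAt f (-(Real.exp (-x) * b x)) (Set.Ioi x) x := by
      intro x hx
      have hnhds : Set.Ici (0:ℝ) ∈ nhds x := Ici_mem_nhds hx.1
      exact ((hf_deriv x (le_of_lt hx.1)).hasDerivAt hnhds).hasDerivWithinAt
    have hcont_g : ContinuousOn (fun s => -(Real.exp (-s) * b s)) (Set.Icc 0 t) :=
      (((Real.continuous_exp.comp continuous_neg).continuousOn.mul
        (hb_cont.mono hIccsub)).neg)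
    have hint : IntervalIntegrable (fun s => -(Real.exp (-s) * b s)) volume 0 t := by
      rw [intervalIntegrable_iff_integrableOn_Icc_of_le ht]
      exact hcont_g.integrableOn_compact isCompact_Icc
    have hftc := intervalIntegral.integral_eq_sub_of_hasDeriv_right_of_le ht hcont_f hderiv hint
    -- split the integral over `Ici 0` as `Ico 0 t` plus `Ici t`
    have hdisj : Disjoint (Set.Ico (0:ℝ) t) (Set.Ici t) := by
      rw [Set.disjoint_left]
      intro x hx hx'
      exact absurd (mem_Ici.1 hx') (not_le.2 hx.2)
    have hunion : Set.Ico (0:ℝ) t ∪ Set.Ici t = Set.Ici 0 := Set.Ico_union_Ici_eq_Ici ht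
    have hsplit : (∫ s in Set.Ici (0:ℝ), Real.exp (-s) * b s)
        = (∫ s in Set.Ico (0:ℝ) t, Real.exp (-s) * b s)
          + ∫ s in Set.Ici t, Real.exp (-s) * b s := by
      rw [← hunion] at hbe_int ⊢
      exact setIntegral_union hdisj measurableSet_Ici
        (hbe_int.mono_set Set.subset_union_left)
        (hbe_int.mono_set Set.subset_union_right)
    have hIco : (∫ s in Set.Ico (0:ℝ) t, Real.exp (-s) * b s)
        = ∫ s in (0:ℝ)..t, Real.exp (-s) * b s := by
      rw [intervalIntegral.integral_of_le ht, integral_Ioc_eq_integral_Ioo,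
        integral_Ico_eq_integral_Ioo]
    have hintval : (∫ s in (0:ℝ)..t, -(Real.exp (-s) * b s))
        = -(∫ s in (0:ℝ)..t, Real.exp (-s) * b s) := intervalIntegral.integral_neg
    have hf0 : f 0 = ∫ s in Set.Ici (0:ℝ), Real.exp (-s) * b s := by
      simp [hf_def, ha0]
    rw [hintval] at hftc
    have : f t = f 0 - ∫ s in (0:ℝ)..t, Real.exp (-s) * b s := by linarith
    rw [this, hf0, hsplit, hIco]
    ring
  -- first conclusion
  have main : ∀ t ∈ Set.Ici (0 : ℝ), a t = ∫ s in Set.Ici t, Real.exp (t - s) * b s := by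
    intro t ht
    have hkt := key t ht
    have ha_eq : a t = Real.exp t * ∫ s in Set.Ici t, Real.exp (-s) * b s := by
      have hpos : Real.exp (-t) ≠ 0 := (Real.exp_pos _).ne'
      have : Real.exp t * f t = Real.exp t * ∫ s in Set.Ici t, Real.exp (-s) * b s := by
        rw [hkt]
      calc a t = Real.exp t * (Real.exp (-t) * a t) := by
              rw [← mul_assoc, ← Real.exp_add]; simp
        _ = Real.exp t * ∫ s in Set.Ici t, Real.exp (-s) * b s := this
    rw [ha_eq, ← integral_const_mul]
    refine setIntegral_congr_fun measurableSet_Ici fun s _ => ?_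
    rw [← mul_assoc, ← Real.exp_add]
    ring_nf
  refine ⟨main, ?_, ?_⟩
  · -- bounds
    intro t ht
    have ht' : (0:ℝ) ≤ t := ht
    have hInt1 := exp_mul_int hb_int t ht'
    have hInt2 : IntegrableOn b (Set.Ici t) := hb_int.mono_set (Set.Ici_subset_Ici.2 ht')
    constructor
    · rw [main t ht]
      refine setIntegral_nonneg measurableSet_Ici fun s hs => ?_
      exact mul_nonneg (Real.exp_pos _).le (hb_nonneg s (le_trans ht' (mem_Ici.1 hs)))
    · rw [main t ht]
      refine setIntegral_mono_on hInt1 hInt2 measurableSet_Ici fun s hs => ?_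
      have h1 : Real.exp (t - s) ≤ 1 := Real.exp_le_one_iff.2 (by linarith [mem_Ici.1 hs])
      have h0 : 0 ≤ b s := hb_nonneg s (le_trans ht' (mem_Ici.1 hs))
      calc Real.exp (t - s) * b s ≤ 1 * b s := mul_le_mul_of_nonneg_right h1 h0
        _ = b s := one_mul _
  · -- decay: squeeze between 0 and `∫_{Ici t} b`, which tends to 0
    have hIoi_int : IntegrableOn b (Set.Ioi 0) := hb_int.mono_set Set.Ioi_subset_Ici_self
    have htail : Tendsto (fun t => ∫ s in Set.Ici t, b s) atTop (nhds 0) := by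
      have h1 : Tendsto (fun t : ℝ => ∫ s in (0:ℝ)..t, b s) atTop
          (nhds (∫ s in Set.Ioi (0:ℝ), b s)) :=
        intervalIntegral_tendsto_integral_Ioi 0 hIoi_int tendsto_id
      have h2 : Tendsto (fun t : ℝ => (∫ s in Set.Ioi (0:ℝ), b s) - ∫ s in (0:ℝ)..t, b s)
          atTop (nhds 0) := by
        have := (tendsto_const_nhds (x := ∫ s in Set.Ioi (0:ℝ), b s)
          (f := atTop (α := ℝ))).sub h1
        simpa using this
      refine h2.congr' ?_
      filter_upwards [eventually_ge_atTop (0:ℝ)] with t ht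
      have hdisj : Disjoint (Set.Ico (0:ℝ) t) (Set.Ici t) := by
        rw [Set.disjoint_left]
        intro x hx hx'
        exact absurd (mem_Ici.1 hx') (not_le.2 hx.2)
      have hunion : Set.Ico (0:ℝ) t ∪ Set.Ici t = Set.Ici 0 := Set.Ico_union_Ici_eq_Ici ht
      have hsplit : (∫ s in Set.Ici (0:ℝ), b s)
          = (∫ s in Set.Ico (0:ℝ) t, b s) + ∫ s in Set.Ici t, b s := by
        rw [← hunion] at hb_int ⊢
        exact setIntegral_union hdisj measurableSet_Ici
          (hb_int.mono_set Set.subset_union_left)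
          (hb_int.mono_set Set.subset_union_right)
      have hIci_Ioi : (∫ s in Set.Ici (0:ℝ), b s) = ∫ s in Set.Ioi (0:ℝ), b s :=
        integral_Ici_eq_integral_Ioi
      have hIco : (∫ s in Set.Ico (0:ℝ) t, b s) = ∫ s in (0:ℝ)..t, b s := by
        rw [intervalIntegral.integral_of_le ht, integral_Ioc_eq_integral_Ioo,
          integral_Ico_eq_integral_Ioo]
      rw [← hIci_Ioi, hsplit, hIco]
      ring
    refine squeeze_zero' ?_ ?_ htail
    · filter_upwards [eventually_ge_atTop (0:ℝ)] with t ht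
      rw [main t ht]
      refine setIntegral_nonneg measurableSet_Ici fun s hs => ?_
      exact mul_nonneg (Real.exp_pos _).le (hb_nonneg s (le_trans ht (mem_Ici.1 hs)))
    · filter_upwards [eventually_ge_atTop (0:ℝ)] with t ht
      rw [main t ht]
      refine setIntegral_mono_on (exp_mul_int hb_int t ht)
        (hb_int.mono_set (Set.Ici_subset_Ici.2 ht)) measurableSet_Ici fun s hs => ?_
      have h1 : Real.exp (t - s) ≤ 1 := Real.exp_le_one_iff.2 (by linarith [mem_Ici.1 hs])
      have h0 : 0 ≤ b s := hb_nonneg s (le_trans ht (mem_Ici.1 hs))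
      calc Real.exp (t - s) * b s ≤ 1 * b s := mul_le_mul_of_nonneg_right h1 h0
        _ = b s := one_mul _
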